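/- Let L1, L2, L3 be two-dimensional vector spaces over ℂ and let L12 ⊂ L1 ⊗ L2, L23 ⊂ L2 ⊗ L3, L123 ⊂ L1 ⊗ L2 ⊗ L3 be two-dimensional subspaces with L123 ⊂ (L12 ⊗ L3) ∩ (L1 ⊗ L23). If rank L12 = 2 and rank L23 ≠ 0, then rank L23 = 2 and there exist bases {x1,y1} of L1, {x2,y2} of L2 and {x3,y3} of L3 such that L123 = span{x1 ⊗ x2 ⊗ x3, y1 ⊗ y2 ⊗ y3}. -/

import Mathlib

open TensorProduct

/-- The rank of the restriction of a quadratic form `q` on `M` to a submodule `L`,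
defined as the rank of the polar (bilinear) form of the restriction. -/
noncomputable def quadRankOn {M : Type*} [AddCommGroup M] [Module ℂ M]
    (q : QuadraticForm ℂ M) (L : Submodule ℂ M) : ℕ :=
  Module.finrank ℂ (LinearMap.range (QuadraticMap.polarBilin (q.comp L.subtype)))

/-- The subspace `L12 ⊗ L3` of `(L1 ⊗ L2) ⊗ L3`. -/
noncomputable def leftTensorSub {L1 L2 L3 : Type*} [AddCommGroup L1] [Module ℂ L1]
    [AddCommGroup L2] [Module ℂ L2] [AddCommGroup L3] [Module ℂ L3]
    (L12 : Submodule ℂ (L1 ⊗[ℂ] L2)) : Submodule ℂ ((L1 ⊗[ℂ] L2) ⊗[ℂ] L3) :=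
  LinearMap.range (TensorProduct.mapIncl L12 (⊤ : Submodule ℂ L3))

/-- The subspace `L1 ⊗ L23` of `(L1 ⊗ L2) ⊗ L3`, transported along the associator. -/
noncomputable def rightTensorSub {L1 L2 L3 : Type*} [AddCommGroup L1] [Module ℂ L1]
    [AddCommGroup L2] [Module ℂ L2] [AddCommGroup L3] [Module ℂ L3]
    (L23 : Submodule ℂ (L2 ⊗[ℂ] L3)) : Submodule ℂ ((L1 ⊗[ℂ] L2) ⊗[ℂ] L3) :=
  Submodule.map (TensorProduct.assoc ℂ L1 L2 L3).symm.toLinearMap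
    (LinearMap.range (TensorProduct.mapIncl (⊤ : Submodule ℂ L1) L23))


section Helpers

variable {M N : Type*} [AddCommGroup M] [Module ℂ M] [AddCommGroup N] [Module ℂ N]

noncomputable def contrL (f : M →ₗ[ℂ] ℂ) : M ⊗[ℂ] N →ₗ[ℂ] N :=
  (TensorProduct.lid ℂ N).toLinearMap ∘ₗ TensorProduct.map f LinearMap.id

@[simp] lemma contrL_tmul (f : M →ₗ[ℂ] ℂ) (m : M) (n : N) :
    contrL f (m ⊗ₜ[ℂ] n) = f m • n := by simp [contrL]

noncomputable def dualT (f : M →ₗ[ℂ] ℂ) (g : N →ₗ[ℂ] ℂ) : M ⊗[ℂ] N →ₗ[ℂ] ℂ :=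
  (TensorProduct.lid ℂ ℂ).toLinearMap ∘ₗ TensorProduct.map f g

@[simp] lemma dualT_tmul (f : M →ₗ[ℂ] ℂ) (g : N →ₗ[ℂ] ℂ) (m : M) (n : N) :
    dualT f g (m ⊗ₜ[ℂ] n) = f m * g n := by simp [dualT, smul_eq_mul]

lemma mem_left_decomp {p q : M} {L : Submodule ℂ M} (hL : L = Submodule.span ℂ {p, q})
    {w : M ⊗[ℂ] N} (hw : w ∈ LinearMap.range (TensorProduct.mapIncl L (⊤ : Submodule ℂ N))) :
    ∃ a b : N, w = p ⊗ₜ[ℂ] a + q ⊗ₜ[ℂ] b := by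
  obtain ⟨t, rfl⟩ := hw
  induction t with
  | zero => exact ⟨0, 0, by simp⟩
  | tmul m n =>
      have hm : (m : M) ∈ Submodule.span ℂ {p, q} := hL ▸ m.2
      obtain ⟨s, t', hst⟩ := Submodule.mem_span_pair.mp hm
      refine ⟨s • (n : N), t' • (n : N), ?_⟩
      have he : (TensorProduct.mapIncl L (⊤ : Submodule ℂ N)) (m ⊗ₜ n)
          = (m : M) ⊗ₜ[ℂ] (n : N) := rfl
      rw [he, ← hst, add_tmul, smul_tmul, smul_tmul]
  | add x y hx hy =>
      obtain ⟨a1, b1, h1⟩ := hx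
      obtain ⟨a2, b2, h2⟩ := hy
      refine ⟨a1 + a2, b1 + b2, ?_⟩
      rw [map_add, h1, h2, tmul_add, tmul_add]; abel

lemma contrL_mem_of_right {L' : Submodule ℂ N} (f : M →ₗ[ℂ] ℂ) {t : M ⊗[ℂ] N}
    (ht : t ∈ LinearMap.range (TensorProduct.mapIncl (⊤ : Submodule ℂ M) L')) :
    contrL f t ∈ L' := by
  obtain ⟨t, rfl⟩ := ht
  induction t with
  | zero => simp
  | tmul m n => simpa [TensorProduct.mapIncl] using L'.smul_mem (f m) n.2
  | add x y hx hy => simpa [map_add] using L'.add_mem hx hy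

lemma indep_pair_of_basis {V : Type*} [AddCommGroup V] [Module ℂ V]
    (b : Module.Basis (Fin 2) ℂ V) : LinearIndependent ℂ ![b 0, b 1] := by
  have h : ![b 0, b 1] = b ∘ ![0, 1] := by ext i; fin_cases i <;> simp
  rw [h]
  exact b.linearIndependent.comp ![0, 1] (by decide)

lemma coord_basis {V : Type*} [AddCommGroup V] [Module ℂ V]
    (b : Module.Basis (Fin 2) ℂ V) (i j : Fin 2) :
    b.coord i (b j) = if j = i then 1 else 0 := by
  simp [Module.Basis.coord_apply, Module.Basis.repr_self, Finsupp.single_apply]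

lemma range_pair_eq' (u v : M) : Set.range ![u, v] = {u, v} := by simp [Set.pair_comm]

lemma finrank_span_pair' {u v : M} (hind : LinearIndependent ℂ ![u, v]) :
    Module.finrank ℂ (Submodule.span ℂ {u, v}) = 2 := by
  have := finrank_span_eq_card hind
  rwa [range_pair_eq', Fintype.card_fin] at this

lemma quadRankOn_eq_zero {q : QuadraticForm ℂ M} {L : Submodule ℂ M}
    (h : ∀ v ∈ L, q v = 0) : quadRankOn q L = 0 := by
  have hB : QuadraticMap.polarBilin (q.comp L.subtype) = 0 := by
    ext x y
    simp [QuadraticMap.polar, h _ x.2, h _ y.2, h _ (L.add_mem x.2 y.2)]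
  rw [quadRankOn, hB, LinearMap.range_zero, finrank_bot]

lemma quadRankOn_eq_zero_of_left (q : QuadraticForm ℂ (M ⊗[ℂ] N))
    (hq : ∀ v : M ⊗[ℂ] N, q v = 0 ↔ ∃ x y, v = x ⊗ₜ[ℂ] y) {x : M} {c0 c1 : N}
    {L : Submodule ℂ (M ⊗[ℂ] N)}
    (hL : L = Submodule.span ℂ {x ⊗ₜ[ℂ] c0, x ⊗ₜ[ℂ] c1}) : quadRankOn q L = 0 := by
  apply quadRankOn_eq_zero
  intro v hv
  rw [hL] at hv
  obtain ⟨s, t, hst⟩ := Submodule.mem_span_pair.mp hv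
  rw [hq]
  exact ⟨x, s • c0 + t • c1, by rw [← hst, tmul_add, tmul_smul, tmul_smul]⟩

lemma quadRankOn_eq_zero_of_right (q : QuadraticForm ℂ (M ⊗[ℂ] N))
    (hq : ∀ v : M ⊗[ℂ] N, q v = 0 ↔ ∃ x y, v = x ⊗ₜ[ℂ] y) {u0 u1 : M} {y : N}
    {L : Submodule ℂ (M ⊗[ℂ] N)}
    (hL : L = Submodule.span ℂ {u0 ⊗ₜ[ℂ] y, u1 ⊗ₜ[ℂ] y}) : quadRankOn q L = 0 := by
  apply quadRankOn_eq_zero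
  intro v hv
  rw [hL] at hv
  obtain ⟨s, t, hst⟩ := Submodule.mem_span_pair.mp hv
  rw [hq]
  exact ⟨s • u0 + t • u1, y, by rw [← hst, add_tmul, smul_tmul', smul_tmul']⟩

lemma indep_pair_tmul_of_funcs {m n : M} {a b : N} (f g : M →ₗ[ℂ] ℂ)
    (hfm : f m = 1) (hfn : f n = 0) (hgm : g m = 0) (hgn : g n = 1)
    (ha : a ≠ 0) (hb : b ≠ 0) :
    LinearIndependent ℂ ![m ⊗ₜ[ℂ] a, n ⊗ₜ[ℂ] b] := by
  rw [LinearIndependent.pair_iff]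
  intro s t hst
  have h1 := congrArg (contrL (N := N) f) hst
  have h2 := congrArg (contrL (N := N) g) hst
  simp only [map_add, map_smul, contrL_tmul, hfm, hfn, hgm, hgn, one_smul, zero_smul,
    smul_zero, add_zero, zero_add, map_zero] at h1 h2
  exact ⟨(smul_eq_zero.mp h1).resolve_right ha, (smul_eq_zero.mp h2).resolve_right hb⟩

lemma quadRankOn_eq_two {q : QuadraticForm ℂ M} {L : Submodule ℂ M} {u v : M}
    (hind : LinearIndependent ℂ ![u, v]) (hL : L = Submodule.span ℂ {u, v})
    (hqu : q u = 0) (hqv : q v = 0) (hne : q (u + v) ≠ 0) :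
    quadRankOn q L = 2 := by
  have hfr : Module.finrank ℂ L = 2 := by rw [hL]; exact finrank_span_pair' hind
  have fd : FiniteDimensional ℂ L := FiniteDimensional.of_finrank_eq_succ hfr
  have hu : u ∈ L := by rw [hL]; exact Submodule.subset_span (by simp)
  have hv : v ∈ L := by rw [hL]; exact Submodule.subset_span (by simp)
  set u' : L := ⟨u, hu⟩ with hu'
  set v' : L := ⟨v, hv⟩ with hv'
  set B := QuadraticMap.polarBilin (q.comp L.subtype) with hB
  have huu : B u' u' = 0 := by
    simp [hB, QuadraticMap.polar, hu', hqu, show u + u = (2:ℂ) • u from (two_smul ℂ u).symm,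
      QuadraticMap.map_smul]
  have hvv : B v' v' = 0 := by
    simp [hB, QuadraticMap.polar, hv', hqv, show v + v = (2:ℂ) • v from (two_smul ℂ v).symm,
      QuadraticMap.map_smul]
  have huv : B u' v' = q (u + v) := by
    simp [hB, QuadraticMap.polar, hu', hv', hqu, hqv]
  have hvu : B v' u' = q (u + v) := by
    simp [hB, QuadraticMap.polar, hu', hv', hqu, hqv, add_comm v u]
  have hinj : Function.Injective B := by
    rw [← LinearMap.ker_eq_bot, LinearMap.ker_eq_bot']
    intro w hw
    have hwmem : (w : M) ∈ Submodule.span ℂ {u, v} := by rw [← hL]; exact w.2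
    obtain ⟨s, t, hst⟩ := Submodule.mem_span_pair.mp hwmem
    have hw' : w = s • u' + t • v' := by
      apply Subtype.ext; simpa using hst.symm
    have e1 : (0 : ℂ) = t * q (u + v) := by
      have := congrArg (fun f => f u') (hw ▸ rfl : B w = 0)
      rw [hw'] at this
      simpa [map_add, map_smul, huu, hvu, smul_eq_mul] using this.symm
    have e2 : (0 : ℂ) = s * q (u + v) := by
      have := congrArg (fun f => f v') (hw ▸ rfl : B w = 0)
      rw [hw'] at this
      simpa [map_add, map_smul, hvv, huv, smul_eq_mul] using this.symm
    have ht : t = 0 := by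
      rcases mul_eq_zero.mp e1.symm with h | h
      · exact h
      · exact absurd h hne
    have hs : s = 0 := by
      rcases mul_eq_zero.mp e2.symm with h | h
      · exact h
      · exact absurd h hne
    rw [hw', hs, ht]; simp
  rw [quadRankOn, ← hB, LinearMap.finrank_range_of_inj hinj, hfr]

end Helpers

lemma structure_of_rank_two {M : Type*} [AddCommGroup M] [Module ℂ M]
    {q : QuadraticForm ℂ M} {L : Submodule ℂ M}
    (hfr : Module.finrank ℂ L = 2) (hr : quadRankOn q L = 2) :
    ∃ u v : M, u ∈ L ∧ v ∈ L ∧ LinearIndependent ℂ ![u, v] ∧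
      L = Submodule.span ℂ {u, v} ∧ q u = 0 ∧ q v = 0 := by
  have fd : FiniteDimensional ℂ L := FiniteDimensional.of_finrank_eq_succ hfr
  have hspan : ∀ u v : M, u ∈ L → v ∈ L → LinearIndependent ℂ ![u, v] →
      L = Submodule.span ℂ {u, v} := by
    intro u v hu hv hind
    have hle : Submodule.span ℂ {u, v} ≤ L := by
      rw [Submodule.span_le]; simp [Set.insert_subset_iff, hu, hv]
    exact (Submodule.eq_of_le_of_finrank_eq hle
      (by rw [finrank_span_pair' hind, hfr])).symm
  set B := QuadraticMap.polarBilin (q.comp L.subtype) with hBdef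
  have hr' : Module.finrank ℂ (LinearMap.range B) = 2 := hr
  have hinj : Function.Injective B := by
    rw [← LinearMap.ker_eq_bot, ← Submodule.finrank_eq_zero]
    have hrn := LinearMap.finrank_range_add_finrank_ker B
    rw [hr', hfr] at hrn
    omega
  set bL : Module.Basis (Fin 2) ℂ L := Module.finBasisOfFinrankEq ℂ L hfr with hbL
  set e : L := bL 0 with he
  set f : L := bL 1 with hf
  set E : M := (e : M) with hE
  set F : M := (f : M) with hF
  have hefM : LinearIndependent ℂ ![E, F] := by
    have h0 := (indep_pair_of_basis bL).map' L.subtype (Submodule.ker_subtype L)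
    have : L.subtype ∘ ![e, f] = ![E, F] := by ext i; fin_cases i <;> simp [hE, hF]
    rwa [this] at h0
  set α : ℂ := q E with hα
  set γ : ℂ := q F with hγ
  set β : ℂ := q (E + F) - α - γ with hβ
  have hBee : B e e = 2 * α := by
    simp only [hBdef, QuadraticMap.polarBilin_apply_apply, QuadraticMap.polar,
      QuadraticMap.comp_apply, Submodule.coe_subtype, Submodule.coe_add, ← hE]
    rw [show E + E = (2:ℂ) • E from (two_smul ℂ E).symm, QuadraticMap.map_smul]
    rw [smul_eq_mul, ← hα]; ring
  have hBff : B f f = 2 * γ := by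
    simp only [hBdef, QuadraticMap.polarBilin_apply_apply, QuadraticMap.polar,
      QuadraticMap.comp_apply, Submodule.coe_subtype, Submodule.coe_add, ← hF]
    rw [show F + F = (2:ℂ) • F from (two_smul ℂ F).symm, QuadraticMap.map_smul]
    rw [smul_eq_mul, ← hγ]; ring
  have hBef : B e f = β := by
    simp only [hBdef, QuadraticMap.polarBilin_apply_apply, QuadraticMap.polar,
      QuadraticMap.comp_apply, Submodule.coe_subtype, Submodule.coe_add, ← hE, ← hF, hβ]
    rw [hα, hγ]
  have hBfe : B f e = β := by
    simp only [hBdef, QuadraticMap.polarBilin_apply_apply, QuadraticMap.polar,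
      QuadraticMap.comp_apply, Submodule.coe_subtype, Submodule.coe_add, ← hE, ← hF, hβ,
      add_comm F E]
    ring
  have hQ : ∀ s t : ℂ, q (s • E + t • F) = s^2 * α + s * t * β + t^2 * γ := by
    intro s t
    have h1 : q (s • E + t • F)
        = q (s • E) + q (t • F) + QuadraticMap.polar (⇑q) (s • E) (t • F) := by
      rw [QuadraticMap.polar]; ring
    rw [h1, QuadraticMap.polar_smul_left, QuadraticMap.polar_smul_right,
      QuadraticMap.map_smul, QuadraticMap.map_smul]
    have hpol : QuadraticMap.polar (⇑q) E F = β := by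
      rw [QuadraticMap.polar, hβ, hα, hγ]
    rw [hpol, ← hα, ← hγ]
    simp [smul_eq_mul]; ring
  have hdisc : β ^ 2 - 4 * α * γ ≠ 0 := by
    intro hd0
    have hker : B (β • e - (2 * α) • f) = 0 := by
      apply bL.ext
      intro i
      fin_cases i
      · show B (β • e - (2 * α) • f) e = (0 : L →ₗ[ℂ] ℂ) e
        rw [map_sub, map_smul, map_smul]
        simp only [LinearMap.sub_apply, LinearMap.smul_apply, hBee, hBfe, smul_eq_mul,
          LinearMap.zero_apply]
        ring
      · show B (β • e - (2 * α) • f) f = (0 : L →ₗ[ℂ] ℂ) f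
        rw [map_sub, map_smul, map_smul]
        simp only [LinearMap.sub_apply, LinearMap.smul_apply, hBef, hBff, smul_eq_mul,
          LinearMap.zero_apply]
        linear_combination hd0
    have hz : β • e - (2 * α) • f = 0 := hinj (by rw [hker, map_zero])
    have hz' : β • e + (-(2 * α)) • f = 0 := by rw [neg_smul, ← sub_eq_add_neg]; exact hz
    obtain ⟨hb0, ha0⟩ := LinearIndependent.pair_iff.mp (indep_pair_of_basis bL) _ _ hz'
    have hα0 : α = 0 := by
      have h2 : 2 * α = 0 := neg_eq_zero.mp ha0
      exact (mul_eq_zero.mp h2).resolve_left two_ne_zero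
    have hBe0 : B e = 0 := by
      apply bL.ext
      intro i
      fin_cases i
      · show B e e = (0 : L →ₗ[ℂ] ℂ) e
        rw [hBee, hα0]; simp
      · show B e f = (0 : L →ₗ[ℂ] ℂ) f
        rw [hBef, hb0]; simp
    have : e = 0 := hinj (by rw [hBe0, map_zero])
    exact bL.ne_zero 0 this
  clear_value α γ β
  obtain ⟨d, hd⟩ := IsAlgClosed.exists_pow_nat_eq (k := ℂ) (β ^ 2 - 4 * α * γ) (n := 2)
    (by norm_num)
  have hdne : d ≠ 0 := by
    intro h0; rw [h0] at hd; simp at hd; exact hdisc hd.symm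
  by_cases hα0 : α = 0
  · have hβne : β ≠ 0 := by
      intro h0; apply hdisc; rw [h0, hα0]; ring
    have hmemv : γ • E - β • F ∈ L := L.sub_mem (L.smul_mem _ e.2) (L.smul_mem _ f.2)
    have hindv : LinearIndependent ℂ ![E, γ • E - β • F] := by
      rw [LinearIndependent.pair_iff]
      intro s t hst
      have hst' : (s + t * γ) • E + (-(t * β)) • F = 0 := by
        rw [← hst]; module
      obtain ⟨h1, h2⟩ := LinearIndependent.pair_iff.mp hefM _ _ hst'
      have ht : t = 0 := (mul_eq_zero.mp (neg_eq_zero.mp h2)).resolve_right hβne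
      refine ⟨?_, ht⟩
      rw [ht] at h1; simpa using h1
    refine ⟨E, γ • E - β • F, e.2, hmemv, hindv, hspan _ _ e.2 hmemv hindv, hα.symm.trans hα0, ?_⟩
    have hv' : γ • E - β • F = γ • E + (-β) • F := by module
    rw [hv', hQ, hα0]; ring
  · set r1 : ℂ := (-β + d) / (2 * α) with hr1
    set r2 : ℂ := (-β - d) / (2 * α) with hr2
    have h2α : (2 : ℂ) * α ≠ 0 := by
      simp [hα0]
    have hx1 : 2 * α * r1 = -β + d := by rw [hr1]; field_simp
    have hx2 : 2 * α * r2 = -β - d := by rw [hr2]; field_simp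
    clear_value r1 r2
    set u : M := r1 • E + F with hu
    set v : M := r2 • E + F with hv
    have hmemu : u ∈ L := L.add_mem (L.smul_mem _ e.2) f.2
    have hmemv : v ∈ L := L.add_mem (L.smul_mem _ e.2) f.2
    have hqu : q u = 0 := by
      have := hQ r1 1
      simp only [one_smul, one_pow, mul_one] at this
      have hG : (4 * α) * (r1 ^ 2 * α + r1 * β + γ) = 0 := by
        linear_combination (2 * α * r1 + β + d) * hx1 + hd
      have h4α : (4 : ℂ) * α ≠ 0 := by simp [hα0]
      rw [hu, this]
      have := (mul_eq_zero.mp hG).resolve_left h4α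
      linear_combination this
    have hqv : q v = 0 := by
      have := hQ r2 1
      simp only [one_smul, one_pow, mul_one] at this
      have hG : (4 * α) * (r2 ^ 2 * α + r2 * β + γ) = 0 := by
        linear_combination (2 * α * r2 + β - d) * hx2 + hd
      have h4α : (4 : ℂ) * α ≠ 0 := by simp [hα0]
      rw [hv, this]
      have := (mul_eq_zero.mp hG).resolve_left h4α
      linear_combination this
    have hindv : LinearIndependent ℂ ![u, v] := by
      rw [LinearIndependent.pair_iff]
      intro s t hst
      have hst' : (s * r1 + t * r2) • E + (s + t) • F = 0 := by
        rw [← hst, hu, hv]; module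
      obtain ⟨h1, h2⟩ := LinearIndependent.pair_iff.mp hefM _ _ hst'
      have hts : t = -s := by linear_combination h2
      rw [hts] at h1
      have hs : s * (r1 - r2) = 0 := by linear_combination h1
      have hr12 : r1 - r2 ≠ 0 := by
        intro hc
        apply hdne
        have h2d : (2 : ℂ) * d = 0 := by linear_combination 2 * α * hc - hx1 + hx2
        have := mul_eq_zero.mp h2d
        simpa using this
      have hs0 : s = 0 := (mul_eq_zero.mp hs).resolve_right hr12
      exact ⟨hs0, by rw [hts, hs0, neg_zero]⟩
    exact ⟨u, v, hmemu, hmemv, hindv, hspan _ _ hmemu hmemv hindv, hqu, hqv⟩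

theorem stmt_5 {L1 L2 L3 : Type*} [AddCommGroup L1] [Module ℂ L1]
    [AddCommGroup L2] [Module ℂ L2] [AddCommGroup L3] [Module ℂ L3]
    (h1 : Module.finrank ℂ L1 = 2) (h2 : Module.finrank ℂ L2 = 2)
    (h3 : Module.finrank ℂ L3 = 2)
    (L12 : Submodule ℂ (L1 ⊗[ℂ] L2)) (L23 : Submodule ℂ (L2 ⊗[ℂ] L3))
    (L123 : Submodule ℂ ((L1 ⊗[ℂ] L2) ⊗[ℂ] L3))
    (h12 : Module.finrank ℂ L12 = 2) (h23 : Module.finrank ℂ L23 = 2)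
    (h123 : Module.finrank ℂ L123 = 2)
    (hsub : L123 ≤ leftTensorSub (L3 := L3) L12 ⊓ rightTensorSub (L1 := L1) L23)
    (q12 : QuadraticForm ℂ (L1 ⊗[ℂ] L2))
    (hq12 : ∀ v : L1 ⊗[ℂ] L2, q12 v = 0 ↔ ∃ (x : L1) (y : L2), v = x ⊗ₜ[ℂ] y)
    (q23 : QuadraticForm ℂ (L2 ⊗[ℂ] L3))
    (hq23 : ∀ v : L2 ⊗[ℂ] L3, q23 v = 0 ↔ ∃ (x : L2) (y : L3), v = x ⊗ₜ[ℂ] y)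
    (hrank12 : quadRankOn q12 L12 = 2) (hrank23 : quadRankOn q23 L23 ≠ 0) :
    quadRankOn q23 L23 = 2 ∧
    ∃ (b1 : Module.Basis (Fin 2) ℂ L1) (b2 : Module.Basis (Fin 2) ℂ L2) (b3 : Module.Basis (Fin 2) ℂ L3),
      L123 = Submodule.span ℂ
        {(b1 0 ⊗ₜ[ℂ] b2 0) ⊗ₜ[ℂ] b3 0, (b1 1 ⊗ₜ[ℂ] b2 1) ⊗ₜ[ℂ] b3 1} := by
  have fd1 : FiniteDimensional ℂ L1 := FiniteDimensional.of_finrank_eq_succ h1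
  have fd2 : FiniteDimensional ℂ L2 := FiniteDimensional.of_finrank_eq_succ h2
  have fd3 : FiniteDimensional ℂ L3 := FiniteDimensional.of_finrank_eq_succ h3
  have fd12 : FiniteDimensional ℂ (L1 ⊗[ℂ] L2) := inferInstance
  have fd23 : FiniteDimensional ℂ (L2 ⊗[ℂ] L3) := inferInstance
  have fd123 : FiniteDimensional ℂ ((L1 ⊗[ℂ] L2) ⊗[ℂ] L3) := inferInstance
  obtain ⟨U, V, hUL, hVL, hUV, hL12span, hqU, hqV⟩ := structure_of_rank_two h12 hrank12
  obtain ⟨x1, x2, hU⟩ := (hq12 U).mp hqU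
  obtain ⟨y1, y2, hV⟩ := (hq12 V).mp hqV
  have hUne : U ≠ 0 := by have := hUV.ne_zero 0; simpa using this
  have hVne : V ≠ 0 := by have := hUV.ne_zero 1; simpa using this
  have hx1 : x1 ≠ 0 := by rintro rfl; exact hUne (by rw [hU, zero_tmul])
  have hx2 : x2 ≠ 0 := by rintro rfl; exact hUne (by rw [hU, tmul_zero])
  have hy1 : y1 ≠ 0 := by rintro rfl; exact hVne (by rw [hV, zero_tmul])
  have hy2 : y2 ≠ 0 := by rintro rfl; exact hVne (by rw [hV, tmul_zero])
  -- x1, y1 are independent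
  have hind1 : LinearIndependent ℂ ![x1, y1] := by
    by_contra hcon
    rw [linearIndependent_fin2] at hcon
    simp only [Matrix.cons_val_zero, Matrix.cons_val_one, Matrix.head_cons] at hcon
    push_neg at hcon
    obtain ⟨a, ha⟩ := hcon hy1
    have hU' : U = y1 ⊗ₜ[ℂ] (a • x2) := by rw [hU, ← ha, smul_tmul]
    have h0 : quadRankOn q12 L12 = 0 :=
      quadRankOn_eq_zero_of_left q12 hq12 (by rw [hL12span, hU', hV])
    rw [h0] at hrank12
    omega
  -- x2, y2 are independent
  have hind2 : LinearIndependent ℂ ![x2, y2] := by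
    by_contra hcon
    rw [linearIndependent_fin2] at hcon
    simp only [Matrix.cons_val_zero, Matrix.cons_val_one, Matrix.head_cons] at hcon
    push_neg at hcon
    obtain ⟨a, ha⟩ := hcon hy2
    have hU' : U = (a • x1) ⊗ₜ[ℂ] y2 := by rw [hU, ← ha, ← smul_tmul]
    have h0 : quadRankOn q12 L12 = 0 :=
      quadRankOn_eq_zero_of_right q12 hq12 (by rw [hL12span, hU', hV])
    rw [h0] at hrank12
    omega
  -- bases of L1 and L2
  let b1 : Module.Basis (Fin 2) ℂ L1 := basisOfLinearIndependentOfCardEqFinrank hind1 (by simp [h1])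
  have hb1 : ⇑b1 = ![x1, y1] := coe_basisOfLinearIndependentOfCardEqFinrank _ _
  let b2 : Module.Basis (Fin 2) ℂ L2 := basisOfLinearIndependentOfCardEqFinrank hind2 (by simp [h2])
  have hb2 : ⇑b2 = ![x2, y2] := coe_basisOfLinearIndependentOfCardEqFinrank _ _
  have hb10 : b1 0 = x1 := by rw [hb1]; simp
  have hb11 : b1 1 = y1 := by rw [hb1]; simp
  have hb20 : b2 0 = x2 := by rw [hb2]; simp
  have hb21 : b2 1 = y2 := by rw [hb2]; simp
  set f0 := b1.coord 0 with hf0def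
  set f1 := b1.coord 1 with hf1def
  set g0 := b2.coord 0 with hg0def
  set g1 := b2.coord 1 with hg1def
  have hf0x1 : f0 x1 = 1 := by rw [hf0def, ← hb10]; simpa using coord_basis b1 0 0
  have hf0y1 : f0 y1 = 0 := by rw [hf0def, ← hb11]; simpa using coord_basis b1 0 1
  have hf1x1 : f1 x1 = 0 := by rw [hf1def, ← hb10]; simpa using coord_basis b1 1 0
  have hf1y1 : f1 y1 = 1 := by rw [hf1def, ← hb11]; simpa using coord_basis b1 1 1
  have hg0x2 : g0 x2 = 1 := by rw [hg0def, ← hb20]; simpa using coord_basis b2 0 0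
  have hg0y2 : g0 y2 = 0 := by rw [hg0def, ← hb21]; simpa using coord_basis b2 0 1
  have hg1x2 : g1 x2 = 0 := by rw [hg1def, ← hb20]; simpa using coord_basis b2 1 0
  have hg1y2 : g1 y2 = 1 := by rw [hg1def, ← hb21]; simpa using coord_basis b2 1 1
  -- decomposition of elements of L123
  have key : ∀ w ∈ L123, ∃ a b : L3, w = U ⊗ₜ[ℂ] a + V ⊗ₜ[ℂ] b ∧
      x2 ⊗ₜ[ℂ] a ∈ L23 ∧ y2 ⊗ₜ[ℂ] b ∈ L23 := by
    intro w hw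
    have hwl : w ∈ LinearMap.range (TensorProduct.mapIncl L12 (⊤ : Submodule ℂ L3)) :=
      (Submodule.mem_inf.mp (hsub hw)).1
    have hwr : w ∈ Submodule.map (TensorProduct.assoc ℂ L1 L2 L3).symm.toLinearMap
        (LinearMap.range (TensorProduct.mapIncl (⊤ : Submodule ℂ L1) L23)) :=
      (Submodule.mem_inf.mp (hsub hw)).2
    obtain ⟨a, b, hab⟩ := mem_left_decomp hL12span hwl
    obtain ⟨t, ht, hwt⟩ := hwr
    have hassoc : (TensorProduct.assoc ℂ L1 L2 L3) w = t := by
      rw [← hwt]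
      exact (TensorProduct.assoc ℂ L1 L2 L3).apply_symm_apply t
    have htw : (TensorProduct.assoc ℂ L1 L2 L3) w
        = x1 ⊗ₜ[ℂ] (x2 ⊗ₜ[ℂ] a) + y1 ⊗ₜ[ℂ] (y2 ⊗ₜ[ℂ] b) := by
      rw [hab, hU, hV, map_add]
      simp [TensorProduct.assoc_tmul]
    have hmem : (TensorProduct.assoc ℂ L1 L2 L3) w ∈
        LinearMap.range (TensorProduct.mapIncl (⊤ : Submodule ℂ L1) L23) := by
      rw [hassoc]; exact ht
    have h23a : x2 ⊗ₜ[ℂ] a ∈ L23 := by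
      have hc := contrL_mem_of_right f0 hmem
      rw [htw] at hc
      simpa [map_add, contrL_tmul, hf0x1, hf0y1] using hc
    have h23b : y2 ⊗ₜ[ℂ] b ∈ L23 := by
      have hc := contrL_mem_of_right f1 hmem
      rw [htw] at hc
      simpa [map_add, contrL_tmul, hf1x1, hf1y1] using hc
    exact ⟨a, b, hab, h23a, h23b⟩
  -- the coordinate maps
  set Φa : (L1 ⊗[ℂ] L2) ⊗[ℂ] L3 →ₗ[ℂ] L3 := contrL (dualT f0 g0) with hΦa
  set Φb : (L1 ⊗[ℂ] L2) ⊗[ℂ] L3 →ₗ[ℂ] L3 := contrL (dualT f1 g1) with hΦb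
  have hΦaU : ∀ c : L3, Φa (U ⊗ₜ[ℂ] c) = c := by
    intro c; rw [hΦa, hU]; simp [hf0x1, hg0x2]
  have hΦaV : ∀ c : L3, Φa (V ⊗ₜ[ℂ] c) = 0 := by
    intro c; rw [hΦa, hV]; simp [hf0y1]
  have hΦbU : ∀ c : L3, Φb (U ⊗ₜ[ℂ] c) = 0 := by
    intro c; rw [hΦb, hU]; simp [hf1x1]
  have hΦbV : ∀ c : L3, Φb (V ⊗ₜ[ℂ] c) = c := by
    intro c; rw [hΦb, hV]; simp [hf1y1, hg1y2]
  have keyΦ : ∀ w ∈ L123, w = U ⊗ₜ[ℂ] (Φa w) + V ⊗ₜ[ℂ] (Φb w) ∧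
      x2 ⊗ₜ[ℂ] (Φa w) ∈ L23 ∧ y2 ⊗ₜ[ℂ] (Φb w) ∈ L23 := by
    intro w hw
    obtain ⟨a, b, hab, h23a, h23b⟩ := key w hw
    have ha' : Φa w = a := by rw [hab, map_add, hΦaU, hΦaV, add_zero]
    have hb' : Φb w = b := by rw [hab, map_add, hΦbU, hΦbV, zero_add]
    rw [ha', hb']
    exact ⟨hab, h23a, h23b⟩
  -- the submodules A and B'
  set A : Submodule ℂ L3 := Submodule.comap ((TensorProduct.mk ℂ L2 L3) x2) L23 with hAdef
  set B' : Submodule ℂ L3 := Submodule.comap ((TensorProduct.mk ℂ L2 L3) y2) L23 with hBdef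
  have hmemA : ∀ a : L3, a ∈ A ↔ x2 ⊗ₜ[ℂ] a ∈ L23 := by
    intro a; rw [hAdef]; simp [Submodule.mem_comap]
  have hmemB : ∀ b : L3, b ∈ B' ↔ y2 ⊗ₜ[ℂ] b ∈ L23 := by
    intro b; rw [hBdef]; simp [Submodule.mem_comap]
  -- dim A ≤ 1
  have hfA : Module.finrank ℂ A ≤ 1 := by
    by_contra hc
    push_neg at hc
    have h2' : Module.finrank ℂ A = 2 :=
      le_antisymm (le_trans (Submodule.finrank_le A) h3.le) hc
    have hAtop : A = ⊤ := Submodule.eq_top_of_finrank_eq (by rw [h2', h3])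
    set b3' := Module.finBasisOfFinrankEq ℂ L3 h3 with hb3'
    have hc0 : x2 ⊗ₜ[ℂ] (b3' 0) ∈ L23 := (hmemA _).mp (hAtop ▸ Submodule.mem_top)
    have hc1 : x2 ⊗ₜ[ℂ] (b3' 1) ∈ L23 := (hmemA _).mp (hAtop ▸ Submodule.mem_top)
    have hindc : LinearIndependent ℂ ![x2 ⊗ₜ[ℂ] (b3' 0), x2 ⊗ₜ[ℂ] (b3' 1)] := by
      apply LinearIndependent.of_comp (contrL (N := L3) g0)
      have hcomp : ⇑(contrL (N := L3) g0) ∘ ![x2 ⊗ₜ[ℂ] (b3' 0), x2 ⊗ₜ[ℂ] (b3' 1)]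
          = ![b3' 0, b3' 1] := by
        ext i; fin_cases i <;> simp [hg0x2]
      rw [hcomp]
      exact indep_pair_of_basis b3'
    have hle : Submodule.span ℂ {x2 ⊗ₜ[ℂ] (b3' 0), x2 ⊗ₜ[ℂ] (b3' 1)} ≤ L23 := by
      rw [Submodule.span_le]; simp [Set.insert_subset_iff, hc0, hc1]
    have heq : L23 = Submodule.span ℂ {x2 ⊗ₜ[ℂ] (b3' 0), x2 ⊗ₜ[ℂ] (b3' 1)} :=
      (Submodule.eq_of_le_of_finrank_eq hle (by rw [finrank_span_pair' hindc, h23])).symm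
    exact hrank23 (quadRankOn_eq_zero_of_left q23 hq23 heq)
  -- dim B' ≤ 1
  have hfB : Module.finrank ℂ B' ≤ 1 := by
    by_contra hc
    push_neg at hc
    have h2' : Module.finrank ℂ B' = 2 :=
      le_antisymm (le_trans (Submodule.finrank_le B') h3.le) hc
    have hBtop : B' = ⊤ := Submodule.eq_top_of_finrank_eq (by rw [h2', h3])
    set b3' := Module.finBasisOfFinrankEq ℂ L3 h3 with hb3'
    have hc0 : y2 ⊗ₜ[ℂ] (b3' 0) ∈ L23 := (hmemB _).mp (hBtop ▸ Submodule.mem_top)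
    have hc1 : y2 ⊗ₜ[ℂ] (b3' 1) ∈ L23 := (hmemB _).mp (hBtop ▸ Submodule.mem_top)
    have hindc : LinearIndependent ℂ ![y2 ⊗ₜ[ℂ] (b3' 0), y2 ⊗ₜ[ℂ] (b3' 1)] := by
      apply LinearIndependent.of_comp (contrL (N := L3) g1)
      have hcomp : ⇑(contrL (N := L3) g1) ∘ ![y2 ⊗ₜ[ℂ] (b3' 0), y2 ⊗ₜ[ℂ] (b3' 1)]
          = ![b3' 0, b3' 1] := by
        ext i; fin_cases i <;> simp [hg1y2]
      rw [hcomp]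
      exact indep_pair_of_basis b3'
    have hle : Submodule.span ℂ {y2 ⊗ₜ[ℂ] (b3' 0), y2 ⊗ₜ[ℂ] (b3' 1)} ≤ L23 := by
      rw [Submodule.span_le]; simp [Set.insert_subset_iff, hc0, hc1]
    have heq : L23 = Submodule.span ℂ {y2 ⊗ₜ[ℂ] (b3' 0), y2 ⊗ₜ[ℂ] (b3' 1)} :=
      (Submodule.eq_of_le_of_finrank_eq hle (by rw [finrank_span_pair' hindc, h23])).symm
    exact hrank23 (quadRankOn_eq_zero_of_left q23 hq23 heq)
  -- the injective map Ψ : L123 → A × B'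
  set ΨA : L123 →ₗ[ℂ] A := LinearMap.codRestrict A (Φa ∘ₗ L123.subtype)
    (fun w => (hmemA _).mpr (keyΦ w w.2).2.1) with hΨA
  set ΨB : L123 →ₗ[ℂ] B' := LinearMap.codRestrict B' (Φb ∘ₗ L123.subtype)
    (fun w => (hmemB _).mpr (keyΦ w w.2).2.2) with hΨB
  set Ψ : L123 →ₗ[ℂ] A × B' := ΨA.prod ΨB with hΨ
  have hΨAval : ∀ w : L123, ((ΨA w : L3)) = Φa w := fun w => rfl
  have hΨBval : ∀ w : L123, ((ΨB w : L3)) = Φb w := fun w => rfl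
  have hΨker : ∀ w : L123, Ψ w = 0 → w = 0 := by
    intro w hw
    have h1 : ΨA w = 0 := by
      have := congrArg Prod.fst hw; simpa [hΨ] using this
    have h2 : ΨB w = 0 := by
      have := congrArg Prod.snd hw; simpa [hΨ] using this
    have ha0 : Φa (w : (L1 ⊗[ℂ] L2) ⊗[ℂ] L3) = 0 := by
      rw [← hΨAval w, h1]; rfl
    have hb0 : Φb (w : (L1 ⊗[ℂ] L2) ⊗[ℂ] L3) = 0 := by
      rw [← hΨBval w, h2]; rfl
    have hdec := (keyΦ w w.2).1
    rw [ha0, hb0] at hdec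
    simp only [tmul_zero, add_zero] at hdec
    exact Subtype.ext hdec
  have hΨinj : Function.Injective Ψ := by
    intro w w' hww
    have hz : Ψ (w - w') = 0 := by
      have hms : Ψ (w - w') = Ψ w - Ψ w' := map_sub Ψ w w'
      rw [hms, hww, sub_self]
    have := hΨker _ hz
    exact sub_eq_zero.mp this
  have hrangeΨ : Module.finrank ℂ (LinearMap.range Ψ) = 2 := by
    rw [LinearMap.finrank_range_of_inj hΨinj, h123]
  have hABfr : Module.finrank ℂ (A × B') = Module.finrank ℂ A + Module.finrank ℂ B' :=
    Module.finrank_prod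
  have hge : 2 ≤ Module.finrank ℂ (A × B') := by
    rw [← hrangeΨ]; exact (LinearMap.range Ψ).finrank_le
  have hfA1 : Module.finrank ℂ A = 1 := by omega
  have hfB1 : Module.finrank ℂ B' = 1 := by omega
  have hABeq : Module.finrank ℂ (A × B') = 2 := by omega
  have hsurjΨ : Function.Surjective Ψ := by
    rw [← LinearMap.range_eq_top]
    exact Submodule.eq_top_of_finrank_eq (by rw [hrangeΨ, hABeq])
  -- pick generators a0 of A, b0 of B'
  have hAne : A ≠ ⊥ := by intro h; rw [h, finrank_bot] at hfA1; omega
  have hBne : B' ≠ ⊥ := by intro h; rw [h, finrank_bot] at hfB1; omega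
  obtain ⟨a0, ha0A, ha0ne⟩ := Submodule.exists_mem_ne_zero_of_ne_bot hAne
  obtain ⟨b0, hb0B, hb0ne⟩ := Submodule.exists_mem_ne_zero_of_ne_bot hBne
  -- U ⊗ a0 and V ⊗ b0 lie in L123
  have hUa0 : U ⊗ₜ[ℂ] a0 ∈ L123 := by
    obtain ⟨w, hw⟩ := hsurjΨ (⟨a0, ha0A⟩, 0)
    have h1 : Φa (w : (L1 ⊗[ℂ] L2) ⊗[ℂ] L3) = a0 := by
      have := congrArg (fun z => ((Prod.fst z : A) : L3)) hw
      simpa [hΨ, hΨAval] using this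
    have h2 : Φb (w : (L1 ⊗[ℂ] L2) ⊗[ℂ] L3) = 0 := by
      have := congrArg (fun z => ((Prod.snd z : B') : L3)) hw
      simpa [hΨ, hΨBval] using this
    have hdec := (keyΦ w w.2).1
    rw [h1, h2] at hdec
    simp only [tmul_zero, add_zero] at hdec
    rw [← hdec]
    exact w.2
  have hVb0 : V ⊗ₜ[ℂ] b0 ∈ L123 := by
    obtain ⟨w, hw⟩ := hsurjΨ (0, ⟨b0, hb0B⟩)
    have h1 : Φa (w : (L1 ⊗[ℂ] L2) ⊗[ℂ] L3) = 0 := by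
      have := congrArg (fun z => ((Prod.fst z : A) : L3)) hw
      simpa [hΨ, hΨAval] using this
    have h2 : Φb (w : (L1 ⊗[ℂ] L2) ⊗[ℂ] L3) = b0 := by
      have := congrArg (fun z => ((Prod.snd z : B') : L3)) hw
      simpa [hΨ, hΨBval] using this
    have hdec := (keyΦ w w.2).1
    rw [h1, h2] at hdec
    simp only [tmul_zero, zero_add] at hdec
    rw [← hdec]
    exact w.2
  have hx2a0 : x2 ⊗ₜ[ℂ] a0 ∈ L23 := (hmemA _).mp ha0A
  have hy2b0 : y2 ⊗ₜ[ℂ] b0 ∈ L23 := (hmemB _).mp hb0B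
  -- x2 ⊗ a0 and y2 ⊗ b0 span L23
  have hindp : LinearIndependent ℂ ![x2 ⊗ₜ[ℂ] a0, y2 ⊗ₜ[ℂ] b0] :=
    indep_pair_tmul_of_funcs g0 g1 hg0x2 hg0y2 hg1x2 hg1y2 ha0ne hb0ne
  have hlep : Submodule.span ℂ {x2 ⊗ₜ[ℂ] a0, y2 ⊗ₜ[ℂ] b0} ≤ L23 := by
    rw [Submodule.span_le]; simp [Set.insert_subset_iff, hx2a0, hy2b0]
  have hL23span : L23 = Submodule.span ℂ {x2 ⊗ₜ[ℂ] a0, y2 ⊗ₜ[ℂ] b0} :=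
    (Submodule.eq_of_le_of_finrank_eq hlep (by rw [finrank_span_pair' hindp, h23])).symm
  -- a0 and b0 are independent
  have hind3 : LinearIndependent ℂ ![a0, b0] := by
    by_contra hcon
    rw [linearIndependent_fin2] at hcon
    simp only [Matrix.cons_val_zero, Matrix.cons_val_one, Matrix.head_cons] at hcon
    push_neg at hcon
    obtain ⟨c, hc⟩ := hcon hb0ne
    have heq' : L23 = Submodule.span ℂ {(c • x2) ⊗ₜ[ℂ] b0, y2 ⊗ₜ[ℂ] b0} := by
      rw [hL23span, smul_tmul, hc]
    exact hrank23 (quadRankOn_eq_zero_of_right q23 hq23 heq')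
  -- rank of L23 is 2
  have hnotprod : q23 (x2 ⊗ₜ[ℂ] a0 + y2 ⊗ₜ[ℂ] b0) ≠ 0 := by
    intro h0
    obtain ⟨x, y, hxy⟩ := (hq23 _).mp h0
    have h1 := congrArg (contrL (N := L3) g0) hxy
    have h2 := congrArg (contrL (N := L3) g1) hxy
    simp only [map_add, contrL_tmul, hg0x2, hg0y2, hg1x2, hg1y2, one_smul, zero_smul,
      add_zero, zero_add] at h1 h2
    have hrel : (g1 x) • a0 + (-(g0 x)) • b0 = 0 := by
      rw [h1, h2]; module
    obtain ⟨hga, hgb⟩ := LinearIndependent.pair_iff.mp hind3 _ _ hrel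
    apply ha0ne
    rw [h1]
    have : g0 x = 0 := by simpa using hgb
    rw [this, zero_smul]
  have hrank23two : quadRankOn q23 L23 = 2 := by
    apply quadRankOn_eq_two hindp hL23span
    · exact (hq23 _).mpr ⟨x2, a0, rfl⟩
    · exact (hq23 _).mpr ⟨y2, b0, rfl⟩
    · exact hnotprod
  -- L123 is spanned by U ⊗ a0 and V ⊗ b0
  have hindP : LinearIndependent ℂ ![U ⊗ₜ[ℂ] a0, V ⊗ₜ[ℂ] b0] := by
    apply indep_pair_tmul_of_funcs (dualT f0 g0) (dualT f1 g1) _ _ _ _ ha0ne hb0ne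
    · rw [hU]; simp [hf0x1, hg0x2]
    · rw [hV]; simp [hf0y1]
    · rw [hU]; simp [hf1x1]
    · rw [hV]; simp [hf1y1, hg1y2]
  have hleP : Submodule.span ℂ {U ⊗ₜ[ℂ] a0, V ⊗ₜ[ℂ] b0} ≤ L123 := by
    rw [Submodule.span_le]; simp [Set.insert_subset_iff, hUa0, hVb0]
  have hL123span : L123 = Submodule.span ℂ {U ⊗ₜ[ℂ] a0, V ⊗ₜ[ℂ] b0} :=
    (Submodule.eq_of_le_of_finrank_eq hleP (by rw [finrank_span_pair' hindP, h123])).symm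
  -- conclude
  let b3 : Module.Basis (Fin 2) ℂ L3 := basisOfLinearIndependentOfCardEqFinrank hind3 (by simp [h3])
  have hb3 : ⇑b3 = ![a0, b0] := coe_basisOfLinearIndependentOfCardEqFinrank _ _
  have hb30 : b3 0 = a0 := by rw [hb3]; simp
  have hb31 : b3 1 = b0 := by rw [hb3]; simp
  refine ⟨hrank23two, b1, b2, b3, ?_⟩
  rw [hb10, hb11, hb20, hb21, hb30, hb31, ← hU, ← hV]
  exact hL123span
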